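/- No early recurrence of complexity for random circuits (union bound): Let 𝒢 be a gate set in U(d), let ν be a probability measure on U(d), let τ ≥ 1 be a natural number such that the τ-fold convolution ν^{*τ} is (α,β)-equidistributed at scale ε, and let K ≥ 1 and r be natural numbers. Then, for the i.i.d. random walk U_t = V_t·V_{t−1}⋯V_1 with V_i ∼ ν, ℙ( ∃ k ∈ {0,…,K−1} : ∃ W ∈ 𝒢^{≤r} with D(U_{τ+k}, W) ≤ ε ) ≤ K·|𝒢|^{r+1}·Vol(β·ε). -/

import Mathlib

open MeasureTheory
open scoped ENNReal Matrix InnerProductSpace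
set_option synthInstance.maxHeartbeats 1000000
set_option maxHeartbeats 1000000

namespace Paper

noncomputable section

instance matMS (d : ℕ) : MeasurableSpace (Matrix (Fin d) (Fin d) ℂ) := borel _
instance matBS (d : ℕ) : BorelSpace (Matrix (Fin d) (Fin d) ℂ) := ⟨rfl⟩

/-- The unitary group `U(d)`. -/
abbrev UG (d : ℕ) := Matrix.unitaryGroup (Fin d) ℂ

/-- ℓ²→ℓ² operator norm (spectral norm) of a matrix. -/
def opNorm {d : ℕ} (A : Matrix (Fin d) (Fin d) ℂ) : ℝ :=
  ‖Matrix.toEuclideanCLM (𝕜 := ℂ) A‖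

/-- Phase-invariant distance on unitary channels. -/
def D {d : ℕ} (U V : UG d) : ℝ :=
  ⨅ z : {z : ℂ // ‖z‖ = 1},
    opNorm ((U : Matrix (Fin d) (Fin d) ℂ) - z.val • (V : Matrix (Fin d) (Fin d) ℂ))

/-- Closed ball of radius `r` around `V` in `U(d)` for the distance `D`. -/
def ball {d : ℕ} (V : UG d) (r : ℝ) : Set (UG d) := {U | D U V ≤ r}

/-- Haar volume of a ball of radius `r`. -/
def Vol {d : ℕ} (μ : Measure (UG d)) (r : ℝ) : ℝ≥0∞ := μ (ball 1 r)

/-- `(α,β)`-equidistribution of `ν` at scale `ε` (relative to the Haar measure `μ`). -/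
def Equidistributed {d : ℕ} (μ ν : Measure (UG d)) (α β ε : ℝ) : Prop :=
  ∀ (V : UG d) (r : ℝ), ε ≤ r →
    Vol μ (α * r) ≤ ν (ball V r) ∧ ν (ball V r) ≤ Vol μ (β * r)

/-- Products of at most `r` elements of the gate set `𝒢`. -/
def wordsLe {d : ℕ} (𝒢 : Finset (UG d)) (r : ℕ) : Set (UG d) :=
  {W | ∃ l : List (UG d), l.length ≤ r ∧ (∀ g ∈ l, g ∈ 𝒢) ∧ l.prod = W}

/-- Convolution of two measures on a monoid: pushforward of the product measure under
multiplication. -/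
def mconv {G : Type*} [Monoid G] [MeasurableSpace G] (ν ϑ : Measure G) : Measure G :=
  (ν.prod ϑ).map (fun p => p.1 * p.2)

/-- `t`-fold convolution power of a measure. -/
def convPow {G : Type*} [Monoid G] [MeasurableSpace G] (ν : Measure G) : ℕ → Measure G
  | 0 => Measure.dirac 1
  | n + 1 => mconv (convPow ν n) ν

/-- The random walk `U_t = V_t ⋯ V_1`. -/
def walk {d : ℕ} {Ω : Type*} (V : ℕ → Ω → UG d) (t : ℕ) (ω : Ω) : UG d :=
  ((List.range t).map (fun i => V (t - i) ω)).prod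

/-- Euclidean space `ℂ^d`. -/
abbrev EV (d : ℕ) := EuclideanSpace ℂ (Fin d)

instance evMS (d : ℕ) : MeasurableSpace (EV d) := borel _
instance evBS (d : ℕ) : BorelSpace (EV d) := ⟨rfl⟩

/-- Distance on pure states. -/
def dS {d : ℕ} (ψ φ : EV d) : ℝ := Real.sqrt (1 - ‖⟪ψ, φ⟫_ℂ‖ ^ 2)

/-- Ball of radius `r` around the state `φ`, inside the set of unit vectors. -/
def ballS {d : ℕ} (φ : EV d) (r : ℝ) : Set (EV d) := {ψ | ‖ψ‖ = 1 ∧ dS ψ φ ≤ r}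

/-- Action of a unitary matrix on a vector. -/
def act {d : ℕ} (U : UG d) (ψ : EV d) : EV d :=
  Matrix.toEuclideanLin (U : Matrix (Fin d) (Fin d) ℂ) ψ

/-- Topological support of a measure. -/
def msupport {X : Type*} [TopologicalSpace X] [MeasurableSpace X] (ν : Measure X) : Set X :=
  {x | ∀ U : Set X, IsOpen U → x ∈ U → ν U ≠ 0}

/-- Packing number (as an extended nonnegative real): supremum of cardinalities of finite
subsets of `Y` whose elements are pairwise at `dist`-distance at least `ε`. -/
def Npack {X : Type*} (dist : X → X → ℝ) (Y : Set X) (ε : ℝ) : ℝ≥0∞ :=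
  ⨆ (S : Finset X) (_ : ↑S ⊆ Y ∧ (S : Set X).Pairwise fun x y => ε ≤ dist x y),
    (S.card : ℝ≥0∞)

end
end Paper


namespace Paper

section Aux
variable {d : ℕ}

set_option synthInstance.maxHeartbeats 1000000 in
instance matSC (d : ℕ) : SecondCountableTopology (Matrix (Fin d) (Fin d) ℂ) :=
  inferInstanceAs (SecondCountableTopology ((Fin d) → (Fin d) → ℂ))

instance ugSC (d : ℕ) : SecondCountableTopology (UG d) :=
  TopologicalSpace.secondCountableTopology_induced _ _ (Subtype.val)

instance ugBS (d : ℕ) : BorelSpace (UG d) := ⟨borel_comap.symm⟩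

lemma toCLM_unitary (B : UG d) :
    Matrix.toEuclideanCLM (𝕜 := ℂ) (B : Matrix (Fin d) (Fin d) ℂ) ∈
      unitary (EuclideanSpace ℂ (Fin d) →L[ℂ] EuclideanSpace ℂ (Fin d)) := by
  have hB := Unitary.mem_iff.mp B.prop
  rw [Unitary.mem_iff]
  constructor
  · rw [← map_star, ← map_mul, hB.1, map_one]
  · rw [← map_star, ← map_mul, hB.2, map_one]

lemma opNorm_mul_unitary (M : Matrix (Fin d) (Fin d) ℂ) (B : UG d) :
    opNorm (M * (B : Matrix (Fin d) (Fin d) ℂ)) = opNorm M := by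
  unfold opNorm
  rw [map_mul]
  exact CStarRing.norm_mul_mem_unitary _ (toCLM_unitary B)

lemma continuous_opNorm : Continuous fun M : Matrix (Fin d) (Fin d) ℂ => opNorm M := by
  let L : Matrix (Fin d) (Fin d) ℂ →ₗ[ℂ] (EuclideanSpace ℂ (Fin d) →L[ℂ] EuclideanSpace ℂ (Fin d)) :=
    { toFun := fun M => Matrix.toEuclideanCLM (𝕜 := ℂ) M
      map_add' := fun x y => map_add _ x y
      map_smul' := fun c x => _root_.map_smul _ c x }
  exact L.continuous_of_finiteDimensional.norm

lemma opNorm_nonneg (M : Matrix (Fin d) (Fin d) ℂ) : 0 ≤ opNorm M := norm_nonneg _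

lemma opNorm_smul_unit {z : ℂ} (hz : ‖z‖ = 1) (M : Matrix (Fin d) (Fin d) ℂ) :
    opNorm (z • M) = opNorm M := by
  unfold opNorm
  rw [_root_.map_smul]
  rw [norm_smul z (Matrix.toEuclideanCLM (𝕜 := ℂ) M), hz, one_mul]

lemma opNorm_add_le (M N : Matrix (Fin d) (Fin d) ℂ) :
    opNorm (M + N) ≤ opNorm M + opNorm N := by
  unfold opNorm; rw [map_add]; exact norm_add_le _ _

lemma opNorm_zero : opNorm (0 : Matrix (Fin d) (Fin d) ℂ) = 0 := by
  unfold opNorm; rw [map_zero, norm_zero]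

lemma opNorm_neg (M : Matrix (Fin d) (Fin d) ℂ) : opNorm (-M) = opNorm M := by
  unfold opNorm; rw [map_neg, norm_neg]

instance : Nonempty {z : ℂ // ‖z‖ = 1} := ⟨⟨1, by simp⟩⟩

lemma D_le (U V : UG d) (z : {z : ℂ // ‖z‖ = 1}) :
    D U V ≤ opNorm ((U : Matrix (Fin d) (Fin d) ℂ) - z.val • (V : Matrix (Fin d) (Fin d) ℂ)) :=
  ciInf_le ⟨0, by rintro x ⟨w, rfl⟩; exact opNorm_nonneg _⟩ z

lemma le_D {c : ℝ} (U V : UG d)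
    (h : ∀ z : {z : ℂ // ‖z‖ = 1},
      c ≤ opNorm ((U : Matrix (Fin d) (Fin d) ℂ) - z.val • (V : Matrix (Fin d) (Fin d) ℂ))) :
    c ≤ D U V :=
  le_ciInf h

lemma D_sub_le (a a' v v' : UG d) :
    D a v ≤ D a' v' + (opNorm ((a : Matrix (Fin d) (Fin d) ℂ) - (a' : Matrix (Fin d) (Fin d) ℂ))
      + opNorm ((v : Matrix (Fin d) (Fin d) ℂ) - (v' : Matrix (Fin d) (Fin d) ℂ))) := by
  set c := opNorm ((a : Matrix (Fin d) (Fin d) ℂ) - (a' : Matrix (Fin d) (Fin d) ℂ))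
      + opNorm ((v : Matrix (Fin d) (Fin d) ℂ) - (v' : Matrix (Fin d) (Fin d) ℂ)) with hc
  rw [← sub_le_iff_le_add]
  apply le_D
  intro z
  rw [sub_le_iff_le_add]
  calc D a v ≤ opNorm ((a : Matrix (Fin d) (Fin d) ℂ) - z.val • (v : Matrix (Fin d) (Fin d) ℂ)) :=
        D_le a v z
    _ ≤ opNorm ((a' : Matrix (Fin d) (Fin d) ℂ) - z.val • (v' : Matrix (Fin d) (Fin d) ℂ)) + c := by
        have heq : (a : Matrix (Fin d) (Fin d) ℂ) - z.val • (v : Matrix (Fin d) (Fin d) ℂ)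
            = ((a' : Matrix (Fin d) (Fin d) ℂ) - z.val • (v' : Matrix (Fin d) (Fin d) ℂ))
              + (((a : Matrix (Fin d) (Fin d) ℂ) - (a' : Matrix (Fin d) (Fin d) ℂ))
                + (-(z.val • ((v : Matrix (Fin d) (Fin d) ℂ) - (v' : Matrix (Fin d) (Fin d) ℂ))))) := by
          rw [smul_sub]; abel
        rw [heq, hc]
        refine le_trans (opNorm_add_le _ _) ?_
        gcongr
        refine le_trans (opNorm_add_le _ _) ?_
        gcongr
        exact le_of_eq (by rw [opNorm_neg, opNorm_smul_unit z.prop])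

lemma abs_D_sub_le (a a' v v' : UG d) :
    |D a v - D a' v'| ≤ opNorm ((a : Matrix (Fin d) (Fin d) ℂ) - (a' : Matrix (Fin d) (Fin d) ℂ))
      + opNorm ((v : Matrix (Fin d) (Fin d) ℂ) - (v' : Matrix (Fin d) (Fin d) ℂ)) := by
  rw [abs_sub_le_iff]
  constructor
  · have := D_sub_le a a' v v'; linarith
  · have := D_sub_le a' a v' v
    have h1 : opNorm ((a' : Matrix (Fin d) (Fin d) ℂ) - (a : Matrix (Fin d) (Fin d) ℂ))
        = opNorm ((a : Matrix (Fin d) (Fin d) ℂ) - (a' : Matrix (Fin d) (Fin d) ℂ)) := by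
      rw [← opNorm_neg]; congr 1; abel
    have h2 : opNorm ((v' : Matrix (Fin d) (Fin d) ℂ) - (v : Matrix (Fin d) (Fin d) ℂ))
        = opNorm ((v : Matrix (Fin d) (Fin d) ℂ) - (v' : Matrix (Fin d) (Fin d) ℂ)) := by
      rw [← opNorm_neg]; congr 1; abel
    rw [h1, h2] at this; linarith

lemma continuous_D : Continuous fun q : UG d × UG d => D q.1 q.2 := by
  rw [continuous_iff_continuousAt]
  intro q₀
  rw [ContinuousAt, tendsto_iff_dist_tendsto_zero]
  have hg : Continuous fun q : UG d × UG d =>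
      opNorm ((q.1 : Matrix (Fin d) (Fin d) ℂ) - (q₀.1 : Matrix (Fin d) (Fin d) ℂ))
        + opNorm ((q.2 : Matrix (Fin d) (Fin d) ℂ) - (q₀.2 : Matrix (Fin d) (Fin d) ℂ)) := by
    apply Continuous.add
    · exact continuous_opNorm.comp
        ((continuous_subtype_val.comp continuous_fst).sub continuous_const)
    · exact continuous_opNorm.comp
        ((continuous_subtype_val.comp continuous_snd).sub continuous_const)
  refine squeeze_zero (g := fun q : UG d × UG d =>
      opNorm ((q.1 : Matrix (Fin d) (Fin d) ℂ) - (q₀.1 : Matrix (Fin d) (Fin d) ℂ))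
        + opNorm ((q.2 : Matrix (Fin d) (Fin d) ℂ) - (q₀.2 : Matrix (Fin d) (Fin d) ℂ)))
      (fun q => dist_nonneg) (fun q => ?_) ?_
  · rw [Real.dist_eq]
    exact abs_D_sub_le q.1 q₀.1 q.2 q₀.2
  · have h0 : opNorm ((q₀.1 : Matrix (Fin d) (Fin d) ℂ) - (q₀.1 : Matrix (Fin d) (Fin d) ℂ))
        + opNorm ((q₀.2 : Matrix (Fin d) (Fin d) ℂ) - (q₀.2 : Matrix (Fin d) (Fin d) ℂ)) = 0 := by
      rw [sub_self, sub_self, opNorm_zero, add_zero]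
    have := hg.tendsto q₀
    rwa [h0] at this

lemma continuous_D_left (W : UG d) : Continuous fun U : UG d => D U W := by
  have h : Continuous fun U : UG d => ((U, W) : UG d × UG d) :=
    continuous_id.prodMk continuous_const
  have h2 : (fun U : UG d => D U W)
      = (fun q : UG d × UG d => D q.1 q.2) ∘ (fun U : UG d => ((U, W) : UG d × UG d)) := rfl
  rw [h2]
  exact continuous_D.comp h

lemma measurableSet_ball (W : UG d) (r : ℝ) : MeasurableSet (ball W r) := by
  have h : ball W r = (fun U : UG d => D U W) ⁻¹' (Set.Iic r) := rfl
  rw [h]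
  exact (continuous_D_left W).measurable measurableSet_Iic

lemma D_mul_right (a b w : UG d) : D (a * b) w = D a (w * b⁻¹) := by
  unfold D
  apply iInf_congr
  intro z
  have key : (((a : Matrix (Fin d) (Fin d) ℂ)
        - z.val • ((w * b⁻¹ : UG d) : Matrix (Fin d) (Fin d) ℂ))) * (b : Matrix (Fin d) (Fin d) ℂ)
      = ((a * b : UG d) : Matrix (Fin d) (Fin d) ℂ)
        - z.val • ((w : UG d) : Matrix (Fin d) (Fin d) ℂ) := by
    rw [sub_mul, smul_mul_assoc, ← Submonoid.coe_mul, ← Submonoid.coe_mul, inv_mul_cancel_right]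
  rw [← key, opNorm_mul_unitary]

end Aux
end Paper


namespace Paper
open ProbabilityTheory

section Walk
variable {d : ℕ}

lemma measurable_listProd {Ω' : Type*} [MeasurableSpace Ω'] (l : List ℕ) (F : ℕ → Ω' → UG d)
    (hF : ∀ i, Measurable (F i)) :
    Measurable fun ω => (l.map (fun i => F i ω)).prod := by
  induction l with
  | nil => simpa using measurable_const
  | cons a l ih =>
    simp only [List.map_cons, List.prod_cons]
    exact (hF a).mul ih

variable {Ω : Type*} [MeasurableSpace Ω]

lemma comp_block (V : ℕ → Ω → UG d) (S : Finset ℕ) (t : ℕ) (g : ℕ → ℕ)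
    (hS : ∀ i, i < t → g i ∈ S) :
    (fun ω => ((List.range t).map (fun i => V (g i) ω)).prod)
      = (fun v : (∀ _ : S, UG d) =>
          ((List.range t).map (fun i => if h : i < t then v ⟨g i, hS i h⟩ else 1)).prod)
        ∘ (fun ω (i : S) => V i ω) := by
  funext ω
  simp only [Function.comp_apply]
  congr 1
  apply List.map_congr_left
  intro i hi
  rw [dif_pos (List.mem_range.mp hi)]

lemma measurable_phi (S : Finset ℕ) (t : ℕ) (g : ℕ → ℕ) (hS : ∀ i, i < t → g i ∈ S) :
    Measurable fun v : (∀ _ : S, UG d) =>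
      ((List.range t).map (fun i => if h : i < t then v ⟨g i, hS i h⟩ else 1)).prod := by
  apply measurable_listProd (Ω' := ∀ _ : S, UG d) _
    (fun i v => if h : i < t then v ⟨g i, hS i h⟩ else 1)
  intro i
  by_cases h : i < t
  · simp only [dif_pos h]
    exact measurable_pi_apply _
  · simp only [dif_neg h]
    exact measurable_const

lemma indep_blocks (V : ℕ → Ω → UG d) (hmeas : ∀ i, Measurable (V i)) (P : Measure Ω)
    (hindep : iIndepFun V P)
    (S T : Finset ℕ) (hST : Disjoint S T) (t u : ℕ) (g f : ℕ → ℕ)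
    (hgS : ∀ i, i < t → g i ∈ S) (hfT : ∀ i, i < u → f i ∈ T) :
    IndepFun (fun ω => ((List.range t).map (fun i => V (g i) ω)).prod)
             (fun ω => ((List.range u).map (fun i => V (f i) ω)).prod) P := by
  have h := (hindep.indepFun_finset S T hST hmeas).comp
    (measurable_phi S t g hgS) (measurable_phi T u f hfT)
  rwa [← comp_block V S t g hgS, ← comp_block V T u f hfT] at h

lemma law_block (V : ℕ → Ω → UG d) (hmeas : ∀ i, Measurable (V i)) (P : Measure Ω)
    [IsProbabilityMeasure P] (ν : Measure (UG d))
    (hlaw : ∀ i, P.map (V i) = ν)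
    (hindep : iIndepFun V P) :
    ∀ t m : ℕ, P.map (fun ω => ((List.range t).map (fun i => V (m + t - i) ω)).prod)
      = convPow ν t := by
  intro t
  induction t with
  | zero =>
    intro m
    simp only [List.range_zero, List.map_nil, List.prod_nil]
    rw [Measure.map_const, measure_univ, one_smul]
    rfl
  | succ t ih =>
    intro m
    have hrw : (fun ω => ((List.range (t+1)).map (fun i => V (m + (t+1) - i) ω)).prod)
        = fun ω => ((List.range t).map (fun i => V ((m+1) + t - i) ω)).prod * V (m+1) ω := by
      funext ω
      rw [List.range_succ, List.map_append, List.prod_append]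
      congr 1
      · congr 1
        apply List.map_congr_left
        intro i hi
        have h : m + (t+1) - i = (m+1) + t - i := by omega
        rw [h]
      · simp only [List.map_cons, List.map_nil, List.prod_cons, List.prod_nil, mul_one]
        congr 1
        omega
    set X : Ω → UG d := fun ω => ((List.range t).map (fun i => V ((m+1) + t - i) ω)).prod with hXdef
    have hXm : Measurable X := measurable_listProd _ (fun i ω => V ((m+1) + t - i) ω)
      (fun i => hmeas _)
    have hYm : Measurable (V (m+1)) := hmeas _
    have hindepXY : IndepFun X (V (m+1)) P := by
      have hdisj : Disjoint (Finset.Ioc (m+1) (m+1+t)) ({m+1} : Finset ℕ) := by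
        rw [Finset.disjoint_left]
        intro a ha hb
        rw [Finset.mem_Ioc] at ha
        rw [Finset.mem_singleton] at hb
        omega
      have h := indep_blocks V hmeas P hindep (Finset.Ioc (m+1) (m+1+t)) {m+1} hdisj
        t 1 (fun i => (m+1) + t - i) (fun _ => m+1)
        (fun i hi => by
          show (m+1) + t - i ∈ Finset.Ioc (m+1) (m+1+t)
          rw [Finset.mem_Ioc]; omega)
        (fun i _ => by simp)
      have h2 : (fun ω => ((List.range 1).map (fun i => V ((fun _ => m+1) i) ω)).prod)
          = V (m+1) := by
        funext ω
        simp
      rwa [h2] at h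
    have key := (indepFun_iff_map_prod_eq_prod_map_map hXm.aemeasurable hYm.aemeasurable).mp
      hindepXY
    rw [hrw]
    have hmul : (fun ω => X ω * V (m+1) ω)
        = (fun p : UG d × UG d => p.1 * p.2) ∘ (fun ω => (X ω, V (m+1) ω)) := rfl
    show P.map (fun ω => X ω * V (m+1) ω) = convPow ν (t+1)
    rw [hmul, ← Measure.map_map measurable_mul (hXm.prodMk hYm), key, ih (m+1), hlaw (m+1)]
    rfl

lemma walk_eq_block (V : ℕ → Ω → UG d) (k τ : ℕ) :
    walk V (τ + k) = fun ω =>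
      ((List.range τ).map (fun i => V (k + τ - i) ω)).prod * walk V k ω := by
  funext ω
  show ((List.range (τ + k)).map (fun i => V (τ + k - i) ω)).prod = _
  rw [List.range_add, List.map_append, List.prod_append, List.map_map]
  congr 1
  · congr 1
    apply List.map_congr_left
    intro i hi
    have h : τ + k - i = k + τ - i := by omega
    rw [h]
  · show ((List.range k).map ((fun i => V (τ + k - i) ω) ∘ (τ + ·))).prod
      = ((List.range k).map (fun i => V (k - i) ω)).prod
    congr 1
    apply List.map_congr_left
    intro i hi
    simp only [Function.comp_apply]
    have h : τ + k - (τ + i) = k - i := by omega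
    rw [h]

end Walk

section Count
variable {d : ℕ}

noncomputable def wordFinset (𝒢 : Finset (UG d)) : ℕ → Finset (UG d)
  | 0 => {1}
  | n+1 =>
    letI := Classical.decEq (UG d)
    insert 1 ((𝒢 ×ˢ wordFinset 𝒢 n).image fun p => p.1 * p.2)

lemma wordsLe_subset (𝒢 : Finset (UG d)) : ∀ n, wordsLe 𝒢 n ⊆ ↑(wordFinset 𝒢 n) := by
  intro n
  induction n with
  | zero =>
    rintro W ⟨l, hlen, hg, rfl⟩
    have hl : l = [] := List.length_eq_zero_iff.mp (Nat.le_zero.mp hlen)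
    subst hl
    simp [wordFinset]
  | succ n ih =>
    rintro W ⟨l, hlen, hg, rfl⟩
    classical
    cases l with
    | nil => simp [wordFinset]
    | cons a l' =>
      have ha : a ∈ 𝒢 := hg a List.mem_cons_self
      have hl' : l'.prod ∈ wordsLe 𝒢 n :=
        ⟨l', by simpa using hlen, fun g hgm => hg g (List.mem_cons_of_mem a hgm), rfl⟩
      have hmem := ih hl'
      rw [Finset.mem_coe] at hmem
      simp only [wordFinset, Finset.coe_insert, Set.mem_insert_iff, Finset.coe_image,
        Set.mem_image, Finset.mem_coe, Finset.mem_product, List.prod_cons]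
      right
      exact ⟨(a, l'.prod), ⟨ha, hmem⟩, rfl⟩

lemma wordFinset_card (𝒢 : Finset (UG d)) (h𝒢 : 2 ≤ 𝒢.card) :
    ∀ n, (wordFinset 𝒢 n).card + 1 ≤ 𝒢.card ^ (n+1) := by
  intro n
  induction n with
  | zero =>
    have h : (wordFinset 𝒢 0).card = 1 := by simp [wordFinset]
    rw [h, pow_one]
    omega
  | succ n ih =>
    letI := Classical.decEq (UG d)
    have h1 : (wordFinset 𝒢 (n+1)).card ≤ 𝒢.card * (wordFinset 𝒢 n).card + 1 := by
      have hunfold : wordFinset 𝒢 (n+1)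
          = insert 1 ((𝒢 ×ˢ wordFinset 𝒢 n).image fun p => p.1 * p.2) := rfl
      rw [hunfold]
      calc (insert 1 ((𝒢 ×ˢ wordFinset 𝒢 n).image fun p => p.1 * p.2)).card
          ≤ ((𝒢 ×ˢ wordFinset 𝒢 n).image fun p => p.1 * p.2).card + 1 :=
            Finset.card_insert_le _ _
        _ ≤ (𝒢 ×ˢ wordFinset 𝒢 n).card + 1 := by
            have := Finset.card_image_le (s := 𝒢 ×ˢ wordFinset 𝒢 n)
              (f := fun p : UG d × UG d => p.1 * p.2)
            omega
        _ = 𝒢.card * (wordFinset 𝒢 n).card + 1 := by rw [Finset.card_product]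
    have h2 : 𝒢.card * ((wordFinset 𝒢 n).card + 1) ≤ 𝒢.card * 𝒢.card ^ (n+1) :=
      Nat.mul_le_mul_left _ ih
    have h3 : 𝒢.card * 𝒢.card ^ (n+1) = 𝒢.card ^ (n+2) := by ring
    have h4 : 𝒢.card * ((wordFinset 𝒢 n).card + 1)
        = 𝒢.card * (wordFinset 𝒢 n).card + 𝒢.card := by ring
    have h5 : 𝒢.card ^ (n+1+1) = 𝒢.card ^ (n+2) := by ring
    omega

end Count
end Paper

namespace Paper
open ProbabilityTheory

theorem stmt15 {d : ℕ} (hd : 2 ≤ d) (μ ν : Measure (UG d))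
    [IsProbabilityMeasure μ] [μ.IsMulLeftInvariant] [IsProbabilityMeasure ν]
    (𝒢 : Finset (UG d)) (h𝒢 : 2 ≤ 𝒢.card)
    {α β ε : ℝ} (hα0 : 0 < α) (hα1 : α ≤ 1) (hβ : 1 ≤ β) (hε : 0 < ε)
    (τ : ℕ) (hτ : 1 ≤ τ)
    (hequi : Equidistributed μ (convPow ν τ) α β ε)
    {Ω : Type*} [MeasurableSpace Ω] (P : Measure Ω) [IsProbabilityMeasure P]
    (V : ℕ → Ω → UG d) (hmeas : ∀ i, Measurable (V i))
    (hlaw : ∀ i, P.map (V i) = ν)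
    (hindep : iIndepFun V P)
    (K : ℕ) (hK : 1 ≤ K) (r : ℕ) :
    P {ω | ∃ k < K, ∃ W ∈ wordsLe 𝒢 r, D (walk V (τ + k) ω) W ≤ ε}
      ≤ (K : ℝ≥0∞) * (𝒢.card : ℝ≥0∞) ^ (r + 1) * Vol μ (β * ε) := by
  classical
  have hone : ∀ (k : ℕ) (W : UG d),
      P {ω | D (walk V (τ + k) ω) W ≤ ε} ≤ Vol μ (β * ε) := by
    intro k W
    set A : Ω → UG d := fun ω => ((List.range τ).map (fun i => V (k + τ - i) ω)).prod with hAdef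
    set B : Ω → UG d := fun ω => ((List.range k).map (fun i => V (k - i) ω)).prod with hBdef
    have hA : Measurable A :=
      measurable_listProd _ (fun i ω => V (k + τ - i) ω) (fun i => hmeas _)
    have hB : Measurable B :=
      measurable_listProd _ (fun i ω => V (k - i) ω) (fun i => hmeas _)
    set s : Set (UG d × UG d) := {p : UG d × UG d | D p.2 (W * p.1⁻¹) ≤ ε} with hsdef
    have hinv : Continuous fun b : UG d => (b⁻¹ : UG d) := by
      have h1 : (fun b : UG d => (b⁻¹ : UG d))
          = fun b : UG d => (⟨star (b : Matrix (Fin d) (Fin d) ℂ),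
              Unitary.star_mem b.prop⟩ : UG d) := by
        funext b
        rw [← Unitary.star_eq_inv]
        apply Subtype.ext
        rfl
      rw [h1]
      exact Continuous.subtype_mk (continuous_star.comp continuous_subtype_val) _
    have hWb : Continuous fun b : UG d => (W * b⁻¹ : UG d) := continuous_const.mul hinv
    have hcont : Continuous fun p : UG d × UG d => D p.2 (W * p.1⁻¹) := by
      have h2 : (fun p : UG d × UG d => D p.2 (W * p.1⁻¹))
          = (fun q : UG d × UG d => D q.1 q.2) ∘ (fun p : UG d × UG d => (p.2, W * p.1⁻¹)) := rfl
      rw [h2]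
      exact continuous_D.comp (continuous_snd.prodMk (hWb.comp continuous_fst))
    have hs : MeasurableSet s := by
      have h3 : s = (fun p : UG d × UG d => D p.2 (W * p.1⁻¹)) ⁻¹' Set.Iic ε := rfl
      rw [h3]
      exact hcont.measurable measurableSet_Iic
    have hE : {ω | D (walk V (τ + k) ω) W ≤ ε} = (fun ω => (B ω, A ω)) ⁻¹' s := by
      ext ω
      simp only [Set.mem_setOf_eq, Set.mem_preimage, walk_eq_block V k τ]
      rw [D_mul_right]
      exact Iff.rfl
    have hBA : Measurable fun ω => (B ω, A ω) := hB.prodMk hA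
    have hindepBA : IndepFun B A P := by
      have hdisj : Disjoint (Finset.Icc 1 k) (Finset.Icc (k+1) (k+τ)) := by
        rw [Finset.disjoint_left]
        intro a ha hb
        rw [Finset.mem_Icc] at ha hb
        omega
      exact indep_blocks V hmeas P hindep (Finset.Icc 1 k) (Finset.Icc (k+1) (k+τ)) hdisj
        k τ (fun i => k - i) (fun i => k + τ - i)
        (fun i hi => by show k - i ∈ Finset.Icc 1 k; rw [Finset.mem_Icc]; omega)
        (fun i hi => by show k + τ - i ∈ Finset.Icc (k+1) (k+τ); rw [Finset.mem_Icc]; omega)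
    haveI : IsProbabilityMeasure (P.map A) := Measure.isProbabilityMeasure_map hA.aemeasurable
    haveI : IsProbabilityMeasure (P.map B) := Measure.isProbabilityMeasure_map hB.aemeasurable
    have hkey := (indepFun_iff_map_prod_eq_prod_map_map hB.aemeasurable hA.aemeasurable).mp
      hindepBA
    have hlawA : P.map A = convPow ν τ := law_block V hmeas P ν hlaw hindep τ k
    calc P {ω | D (walk V (τ + k) ω) W ≤ ε}
        = P.map (fun ω => (B ω, A ω)) s := by rw [hE, Measure.map_apply hBA hs]
      _ = ((P.map B).prod (P.map A)) s := by rw [hkey]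
      _ = ∫⁻ b, (P.map A) (Prod.mk b ⁻¹' s) ∂(P.map B) := Measure.prod_apply hs
      _ ≤ ∫⁻ _, Vol μ (β * ε) ∂(P.map B) := by
          apply lintegral_mono
          intro b
          show (Measure.map A P) (Prod.mk b ⁻¹' s) ≤ Vol μ (β * ε)
          have hslice : Prod.mk b ⁻¹' s = ball (W * b⁻¹) ε := rfl
          rw [hslice, hlawA]
          exact (hequi (W * b⁻¹) ε le_rfl).2
      _ = Vol μ (β * ε) := by rw [lintegral_const, measure_univ, mul_one]
  have hinc : {ω | ∃ k < K, ∃ W ∈ wordsLe 𝒢 r, D (walk V (τ + k) ω) W ≤ ε}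
      ⊆ ⋃ k ∈ Finset.range K, ⋃ W ∈ wordFinset 𝒢 r, {ω | D (walk V (τ + k) ω) W ≤ ε} := by
    rintro ω ⟨k, hk, W, hW, h⟩
    simp only [Set.mem_iUnion, Set.mem_setOf_eq]
    exact ⟨k, Finset.mem_range.mpr hk, W, Finset.mem_coe.mp (wordsLe_subset 𝒢 r hW), h⟩
  have hcast : ((wordFinset 𝒢 r).card : ℝ≥0∞) ≤ (𝒢.card : ℝ≥0∞) ^ (r + 1) := by
    have h := wordFinset_card 𝒢 h𝒢 r
    have h' : (wordFinset 𝒢 r).card ≤ 𝒢.card ^ (r+1) := by omega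
    calc ((wordFinset 𝒢 r).card : ℝ≥0∞) ≤ ((𝒢.card ^ (r+1) : ℕ) : ℝ≥0∞) := by
          exact_mod_cast h'
      _ = (𝒢.card : ℝ≥0∞) ^ (r + 1) := by push_cast; rfl
  calc P {ω | ∃ k < K, ∃ W ∈ wordsLe 𝒢 r, D (walk V (τ + k) ω) W ≤ ε}
      ≤ P (⋃ k ∈ Finset.range K, ⋃ W ∈ wordFinset 𝒢 r,
          {ω | D (walk V (τ + k) ω) W ≤ ε}) := measure_mono hinc
    _ ≤ ∑ k ∈ Finset.range K, P (⋃ W ∈ wordFinset 𝒢 r,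
          {ω | D (walk V (τ + k) ω) W ≤ ε}) := measure_biUnion_finset_le _ _
    _ ≤ ∑ k ∈ Finset.range K, ∑ W ∈ wordFinset 𝒢 r,
          P {ω | D (walk V (τ + k) ω) W ≤ ε} :=
        Finset.sum_le_sum (fun k _ => measure_biUnion_finset_le _ _)
    _ ≤ ∑ k ∈ Finset.range K, ∑ W ∈ wordFinset 𝒢 r, Vol μ (β * ε) :=
        Finset.sum_le_sum (fun k _ => Finset.sum_le_sum (fun W _ => hone k W))
    _ = (K : ℝ≥0∞) * (((wordFinset 𝒢 r).card : ℝ≥0∞) * Vol μ (β * ε)) := by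
        simp only [Finset.sum_const, nsmul_eq_mul, Finset.card_range]
    _ ≤ (K : ℝ≥0∞) * ((𝒢.card : ℝ≥0∞) ^ (r + 1) * Vol μ (β * ε)) := by
        gcongr
    _ = (K : ℝ≥0∞) * (𝒢.card : ℝ≥0∞) ^ (r + 1) * Vol μ (β * ε) := by ring

end Paper
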